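/- For all real x in [0, pi], (1/2) + (1/2)*cos(x) <= e^{-x^2/8}. -/

import Mathlib

/-- For all real `x ∈ [0, π]`, `1/2 + (1/2)·cos x ≤ e^{-x²/8}`. -/
theorem half_add_half_cos_le_exp (x : ℝ) (hx : x ∈ Set.Icc 0 Real.pi) :
    1 / 2 + (1 / 2) * Real.cos x ≤ Real.exp (-(x ^ 2) / 8) := by
  obtain ⟨hx0, hxpi⟩ := hx
  rcases eq_or_lt_of_le hx0 with rfl | hx0
  · norm_num
  have hpi : Real.pi < 3.15 := Real.pi_lt_d2
  -- step 1: LHS = cos(x/2)^2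
  have h1 : 1 / 2 + (1 / 2) * Real.cos x = Real.cos (x / 2) ^ 2 := by
    have := Real.cos_sq (x / 2)
    rw [show 2 * (x / 2) = x by ring] at this
    linarith
  -- sin(x/4) lower bound
  have hu0 : 0 < x / 4 := by linarith
  have hu1 : x / 4 ≤ 1 := by linarith
  have hs := Real.sin_gt_sub_cube hu0
  have hsle : Real.sin (x / 4) ≤ x / 4 := Real.sin_le (le_of_lt hu0)
  -- step 2: 2 sin(x/4)^2 ≥ (x/4)^2
  have h2 : (x / 4) ^ 2 ≤ 2 * Real.sin (x / 4) ^ 2 := by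
    nlinarith [sq_nonneg (x / 4), sq_nonneg (Real.sin (x / 4)), sq_nonneg (x / 4 - (x/4)^3/4)]
  -- step 3: cos(x/2) = 1 - 2 sin(x/4)^2
  have h3 : Real.cos (x / 2) = 1 - 2 * Real.sin (x / 4) ^ 2 := by
    have := Real.cos_sq (x / 4)
    rw [show 2 * (x / 4) = x / 2 by ring] at this
    have hps := Real.sin_sq_add_cos_sq (x / 4)
    linarith
  -- step 4
  have h4 : Real.cos (x / 2) ≤ 1 - x ^ 2 / 16 := by
    rw [h3]; nlinarith
  have h5 : (0:ℝ) ≤ 1 - x ^ 2 / 16 := by nlinarith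
  have hc0 : 0 ≤ Real.cos (x / 2) :=
    Real.cos_nonneg_of_mem_Icc ⟨by linarith [Real.pi_pos], by linarith⟩
  -- step 6
  have h6 : (1 - x ^ 2 / 16) ^ 2 ≤ Real.exp (-(x ^ 2) / 8) := by
    have he : 1 - x ^ 2 / 16 ≤ Real.exp (-(x ^ 2) / 16) := by
      have := Real.add_one_le_exp (-(x ^ 2) / 16)
      linarith
    calc (1 - x ^ 2 / 16) ^ 2 ≤ Real.exp (-(x ^ 2) / 16) ^ 2 := by
          exact pow_le_pow_left₀ h5 he 2
      _ = Real.exp (-(x ^ 2) / 8) := by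
          rw [← Real.exp_nat_mul]; ring_nf
  calc 1 / 2 + (1 / 2) * Real.cos x = Real.cos (x / 2) ^ 2 := h1
    _ ≤ (1 - x ^ 2 / 16) ^ 2 := pow_le_pow_left₀ hc0 h4 2
    _ ≤ Real.exp (-(x ^ 2) / 8) := h6
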